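/- arXiv:2501.13028 — 3 statements merged into one kernel-verified Lean document; each statement's English description precedes it below -/
import Mathlib

section
/- Let γ ∈ (0,1], let f : ℝ^m → ℝ be Borel measurable and integrable with respect to every ν ∈ 𝒟₁(ℝ^m), and define K_f(ν) := ∫ f dν. Then K_f is indifferent to γ if and only if there exists α > 0 such that f(γ·c) = α·f(c) + (1 − α)·f(0) for all c ∈ ℝ^m. -/
open MeasureTheory

noncomputable section

abbrev Rm (m : ℕ) := Fin m → ℝ

/-- The ℓ¹ norm on ℝ^m. -/
def norm1 {m : ℕ} (x : Rm m) : ℝ := ∑ i, |x i|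

/-- Finite first moment with respect to the ℓ¹ norm. -/
def FiniteFirstMoment {m : ℕ} (ν : Measure (Rm m)) : Prop :=
  Integrable (fun x => norm1 x) ν

/-- Pushforward of `ν` under scaling by `γ`. -/
def Sgamma {m : ℕ} (γ : ℝ) (ν : Measure (Rm m)) : Measure (Rm m) :=
  ν.map (fun x => γ • x)

/-- `K` is indifferent to `γ`: `K ν ≥ K ν'` implies `K (S_γ ν) ≥ K (S_γ ν')`
for all `ν, ν' ∈ 𝒟₁(ℝ^m)`. -/
def IndiffGamma {m : ℕ} (γ : ℝ) (K : Measure (Rm m) → ℝ) : Prop :=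
  ∀ ν ν' : Measure (Rm m),
    IsProbabilityMeasure ν → FiniteFirstMoment ν →
    IsProbabilityMeasure ν' → FiniteFirstMoment ν' →
    K ν' ≤ K ν → K (Sgamma γ ν') ≤ K (Sgamma γ ν)

lemma norm1_meas {m : ℕ} : Measurable (fun x : Rm m => norm1 x) := by
  unfold norm1
  exact Finset.measurable_sum _ fun i _ => (measurable_pi_apply i).abs

lemma integrable_dirac'' {m : ℕ} (h : Rm m → ℝ) (hh : Measurable h) (x : Rm m) :
    Integrable h (Measure.dirac x) := by
  refine ⟨hh.aestronglyMeasurable, ?_⟩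
  rw [HasFiniteIntegral, lintegral_dirac]
  exact ENNReal.coe_lt_top

lemma mix_prob {m : ℕ} (t : ℝ) (ht : 0 ≤ t) (ht1 : t ≤ 1) (x y : Rm m) :
    IsProbabilityMeasure
      (ENNReal.ofReal t • Measure.dirac x + ENNReal.ofReal (1 - t) • Measure.dirac y) := by
  constructor
  simp only [Measure.add_apply, Measure.smul_apply, smul_eq_mul, measure_univ, mul_one]
  rw [← ENNReal.ofReal_add ht (by linarith)]
  norm_num

lemma mix_int {m : ℕ} (h : Rm m → ℝ) (hh : Measurable h) (t : ℝ) (ht : 0 ≤ t) (ht1 : t ≤ 1)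
    (x y : Rm m) :
    ∫ z, h z ∂(ENNReal.ofReal t • Measure.dirac x + ENNReal.ofReal (1 - t) • Measure.dirac y)
      = t * h x + (1 - t) * h y := by
  rw [integral_add_measure ((integrable_dirac'' h hh x).smul_measure ENNReal.ofReal_ne_top)
      ((integrable_dirac'' h hh y).smul_measure ENNReal.ofReal_ne_top),
    integral_smul_measure, integral_smul_measure, integral_dirac, integral_dirac,
    ENNReal.toReal_ofReal ht, ENNReal.toReal_ofReal (by linarith : (0:ℝ) ≤ 1 - t)]
  simp [smul_eq_mul]

lemma mix_ffm {m : ℕ} (t : ℝ) (x y : Rm m) :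
    FiniteFirstMoment
      (ENNReal.ofReal t • Measure.dirac x + ENNReal.ofReal (1 - t) • Measure.dirac y) :=
  ((integrable_dirac'' _ norm1_meas x).smul_measure ENNReal.ofReal_ne_top).add_measure
    ((integrable_dirac'' _ norm1_meas y).smul_measure ENNReal.ofReal_ne_top)

/-- An expected utility `K_f(ν) = ∫ f dν` is indifferent to `γ` iff there is `α > 0`
with `f (γ c) = α f c + (1 − α) f 0` for all `c`. -/
theorem expectedUtility_indiffGamma_iff (m : ℕ) (hm : 1 ≤ m)
    (γ : ℝ) (hγ : γ ∈ Set.Ioc (0 : ℝ) 1)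
    (f : Rm m → ℝ) (hf : Measurable f)
    (hint : ∀ ν : Measure (Rm m), IsProbabilityMeasure ν → FiniteFirstMoment ν →
      Integrable f ν) :
    IndiffGamma γ (fun ν => ∫ x, f x ∂ν) ↔
      ∃ α : ℝ, 0 < α ∧ ∀ c : Rm m, f (γ • c) = α * f c + (1 - α) * f 0 := by
  obtain ⟨hγ0, hγ1⟩ := hγ
  have hγne : γ ≠ 0 := hγ0.ne'
  have hsm : Measurable (fun x : Rm m => γ • x) := measurable_const_smul γ
  set g : Rm m → ℝ := fun x => f (γ • x) with hgdef
  have hgmeas : Measurable g := hf.comp hsm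
  have hA : ∀ ν : Measure (Rm m), ∫ x, f x ∂(Sgamma γ ν) = ∫ x, g x ∂ν := fun ν =>
    integral_map hsm.aemeasurable hf.aestronglyMeasurable
  constructor
  · intro H
    have key : ∀ ν ν' : Measure (Rm m), IsProbabilityMeasure ν → FiniteFirstMoment ν →
        IsProbabilityMeasure ν' → FiniteFirstMoment ν' →
        (∫ x, f x ∂ν') ≤ ∫ x, f x ∂ν → (∫ x, g x ∂ν') ≤ ∫ x, g x ∂ν := by
      intro ν ν' h1 h2 h3 h4 hle
      have := H ν ν' h1 h2 h3 h4 hle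
      simpa [hA] using this
    have ffm_dirac : ∀ x : Rm m, FiniteFirstMoment (Measure.dirac x) :=
      fun x => integrable_dirac'' _ norm1_meas x
    have mono : ∀ x y : Rm m, f x ≤ f y → g x ≤ g y := by
      intro x y hxy
      have := key (Measure.dirac y) (Measure.dirac x) inferInstance (ffm_dirac y)
        inferInstance (ffm_dirac x) (by simpa [integral_dirac] using hxy)
      simpa [integral_dirac] using this
    have mixeq : ∀ (t : ℝ), 0 ≤ t → t ≤ 1 → ∀ x y z : Rm m,
        f z = t * f x + (1 - t) * f y → g z = t * g x + (1 - t) * g y := by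
      intro t ht ht1 x y z hfz
      have hpm := mix_prob t ht ht1 x y
      have hffm := mix_ffm (m := m) t x y
      have hfmix := mix_int f hf t ht ht1 x y
      have hgmix := mix_int g hgmeas t ht ht1 x y
      have e1 := key _ (Measure.dirac z) hpm hffm inferInstance (ffm_dirac z)
        (by rw [integral_dirac, hfmix, hfz])
      have e2 := key (Measure.dirac z) _ inferInstance (ffm_dirac z) hpm hffm
        (by rw [integral_dirac, hfmix, hfz])
      rw [integral_dirac, hgmix] at e1 e2
      linarith
    by_cases hc : ∀ c : Rm m, f c = f 0
    · refine ⟨1, one_pos, fun c => ?_⟩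
      rw [hc (γ • c), hc c]; ring
    · push_neg at hc
      obtain ⟨c₀, hc₀⟩ := hc
      obtain ⟨a, b, hab⟩ : ∃ a b : Rm m, f a < f b := by
        rcases lt_or_gt_of_ne hc₀ with h | h
        · exact ⟨c₀, 0, h⟩
        · exact ⟨0, c₀, h⟩
      set D := f b - f a with hD
      have hDpos : 0 < D := by simp only [hD]; linarith
      set α := (g b - g a) / D with hα
      have hga : g a ≤ g b := mono a b hab.le
      have main : ∀ c : Rm m, g c = α * (f c - f a) + g a := by
        intro c
        have e3 : D * (g c - g a) = (f c - f a) * (g b - g a) := by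
          rcases le_or_gt (f c) (f a) with h1 | h1
          · -- f c ≤ f a
            set t := (f a - f c) / (f b - f c) with htdef
            have hbc : 0 < f b - f c := by linarith
            have ht0 : 0 ≤ t := div_nonneg (by linarith) hbc.le
            have ht1 : t ≤ 1 := by rw [htdef, div_le_one hbc]; linarith
            have hfa : f a = t * f b + (1 - t) * f c := by
              rw [htdef]; field_simp; ring
            have e := mixeq t ht0 ht1 b c a hfa
            rw [htdef] at e
            field_simp at e
            rw [hD]
            linear_combination -e
          · rcases le_or_gt (f c) (f b) with h2 | h2
            · -- f a < f c ≤ f b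
              set t := (f b - f c) / D with htdef
              have ht0 : 0 ≤ t := div_nonneg (by linarith) hDpos.le
              have ht1 : t ≤ 1 := by rw [htdef, div_le_one hDpos]; simp only [hD]; linarith
              have hfc : f c = t * f a + (1 - t) * f b := by
                rw [htdef, hD]; field_simp [sub_ne_zero.mpr hab.ne']; ring
              have e := mixeq t ht0 ht1 a b c hfc
              rw [htdef, hD] at e
              field_simp [sub_ne_zero.mpr hab.ne'] at e
              rw [hD]
              linear_combination e
            · -- f b < f c
              set t := (f c - f b) / (f c - f a) with htdef
              have hca : 0 < f c - f a := by linarith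
              have ht0 : 0 ≤ t := div_nonneg (by linarith) hca.le
              have ht1 : t ≤ 1 := by rw [htdef, div_le_one hca]; linarith
              have hfb : f b = t * f a + (1 - t) * f c := by
                rw [htdef]; field_simp; ring
              have e := mixeq t ht0 ht1 a c b hfb
              rw [htdef] at e
              field_simp at e
              rw [hD]
              linear_combination -e
        rw [hα]
        field_simp
        linarith [e3]
      have hgab : g a < g b := by
        rcases hga.lt_or_eq with h | h
        · exact h
        · exfalso
          have hα0 : α = 0 := by rw [hα, h]; simp
          have hgc : ∀ c : Rm m, g c = g a := fun c => by rw [main c, hα0]; ring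
          have hb' : f b = g a := by
            rw [← hgc (γ⁻¹ • b)]
            simp only [hgdef, smul_inv_smul₀ hγne]
          have ha' : f a = g a := by
            rw [← hgc (γ⁻¹ • a)]
            simp only [hgdef, smul_inv_smul₀ hγne]
          rw [hb', ha'] at hab
          exact lt_irrefl _ hab
      have hαpos : 0 < α := div_pos (by linarith) hDpos
      refine ⟨α, hαpos, fun c => ?_⟩
      have h0 : g 0 = f 0 := by simp only [hgdef, smul_zero]
      have h00 := main 0
      rw [h0] at h00
      have hc' := main c
      have : f (γ • c) = g c := rfl
      linarith
  · rintro ⟨α, hαpos, hfa⟩ ν ν' hp hffm hp' hffm' hle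
    simp only at hle ⊢
    rw [hA, hA]
    have hcalc : ∀ μ : Measure (Rm m), IsProbabilityMeasure μ → FiniteFirstMoment μ →
        ∫ x, g x ∂μ = α * (∫ x, f x ∂μ) + (1 - α) * f 0 := by
      intro μ hpμ hfμ
      have hint' := hint μ hpμ hfμ
      calc ∫ x, g x ∂μ = ∫ x, (α * f x + (1 - α) * f 0) ∂μ := by
            apply integral_congr_ae
            filter_upwards with x
            exact hfa x
        _ = α * (∫ x, f x ∂μ) + (1 - α) * f 0 := by
            rw [integral_add (hint'.const_mul α) (integrable_const _),
              integral_const_mul, integral_const, probReal_univ]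
            simp
    rw [hcalc ν hp hffm, hcalc ν' hp' hffm']
    have := mul_le_mul_of_nonneg_left hle hαpos.le
    linarith
end
end

section
/- Let m ∈ ℕ, γ ∈ (0,1], α ∈ (0,1]. Let ≽ be a binary relation on 𝒟₁(ℝ^m) and u : 𝒟₁(ℝ^m) → ℝ such that: (i) for all ν, ν' ∈ 𝒟₁(ℝ^m), ν ≽ ν' if and only if u(ν) ≥ u(ν'); and (ii) the map x ↦ u(δ_x) is Borel measurable, ν-integrable, and u(ν) = ∫ u(δ_x) dν(x) for all ν ∈ 𝒟₁(ℝ^m). Then the following are equivalent: (a) for all ν, ν' ∈ 𝒟₁(ℝ^m), the measures (1/(1+α))·S_γ ν + (α/(1+α))·ν' and (1/(1+α))·S_γ ν' + (α/(1+α))·ν are ≽-equivalent (each is ≽ the other); (b) for all c ∈ ℝ^m, α·(u(δ_c) − u(δ_0)) = u(δ_{γ·c}) − u(δ_0). -/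
open MeasureTheory

noncomputable section

/-- The mixture `(1/(1+α))·S_γ ν + (α/(1+α))·ν'` (setwise convex combination). -/
def discountMix {m : ℕ} (γ α : ℝ) (ν ν' : Measure (Rm m)) : Measure (Rm m) :=
  (ENNReal.ofReal (1 / (1 + α))) • Sgamma γ ν + (ENNReal.ofReal (α / (1 + α))) • ν'

-- auxiliary lemmas

lemma measurable_scale {m : ℕ} (γ : ℝ) : Measurable (fun x : Rm m => γ • x) :=
  (continuous_id.const_smul γ).measurable

lemma continuous_norm1 {m : ℕ} : Continuous (norm1 (m := m)) := by
  unfold norm1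
  exact continuous_finset_sum _ fun i _ => (continuous_apply i).abs

lemma ffm_dirac {m : ℕ} (c : Rm m) : FiniteFirstMoment (Measure.dirac c) := by
  unfold FiniteFirstMoment
  refine ⟨continuous_norm1.measurable.aestronglyMeasurable, ?_⟩
  rw [HasFiniteIntegral, lintegral_dirac' _ continuous_norm1.measurable.enorm]
  exact ENNReal.coe_lt_top

lemma integrable_dirac' {m : ℕ} {f : Rm m → ℝ} (hf : Measurable f) (c : Rm m) :
    Integrable f (Measure.dirac c) := by
  refine ⟨hf.aestronglyMeasurable, ?_⟩
  rw [HasFiniteIntegral, lintegral_dirac' _ hf.enorm]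
  exact ENNReal.coe_lt_top

lemma Sgamma_dirac {m : ℕ} (γ : ℝ) (c : Rm m) :
    Sgamma γ (Measure.dirac c) = Measure.dirac (γ • c) := by
  unfold Sgamma
  rw [Measure.map_dirac' (measurable_scale γ)]

lemma mix_prob_s7 {m : ℕ} {γ α : ℝ} (hα : 0 < α) (ν ν' : Measure (Rm m))
    (hν : IsProbabilityMeasure ν) (hν' : IsProbabilityMeasure ν') :
    IsProbabilityMeasure (discountMix γ α ν ν') := by
  have h1 : IsProbabilityMeasure (Sgamma γ ν) :=
    Measure.isProbabilityMeasure_map (measurable_scale γ).aemeasurable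
  constructor
  simp only [discountMix, Measure.add_apply, Measure.smul_apply, smul_eq_mul,
    h1.measure_univ, hν'.measure_univ, mul_one]
  rw [← ENNReal.ofReal_add (by positivity) (by positivity)]
  have : 1 / (1 + α) + α / (1 + α) = 1 := by field_simp
  rw [this, ENNReal.ofReal_one]

lemma integrable_Sgamma_norm1 {m : ℕ} {γ : ℝ} (hγ : 0 < γ) (ν : Measure (Rm m))
    (hν : FiniteFirstMoment ν) : Integrable (fun x => norm1 x) (Sgamma γ ν) := by
  unfold Sgamma
  rw [integrable_map_measure continuous_norm1.measurable.aestronglyMeasurable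
    (measurable_scale γ).aemeasurable]
  have : (fun x : Rm m => norm1 x) ∘ (fun x => γ • x) = fun x => γ * norm1 x := by
    funext x
    simp only [Function.comp_apply, norm1, Pi.smul_apply, smul_eq_mul, abs_mul,
      abs_of_pos hγ, Finset.mul_sum]
  rw [this]
  exact hν.const_mul γ

lemma mix_ffm_s7 {m : ℕ} {γ α : ℝ} (hγ : 0 < γ) (ν ν' : Measure (Rm m))
    (hν : FiniteFirstMoment ν) (hν' : FiniteFirstMoment ν') :
    FiniteFirstMoment (discountMix γ α ν ν') := by
  unfold FiniteFirstMoment discountMix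
  exact ((integrable_Sgamma_norm1 hγ ν hν).smul_measure ENNReal.ofReal_ne_top).add_measure
    (hν'.smul_measure ENNReal.ofReal_ne_top)

lemma integral_mix {m : ℕ} {γ α : ℝ} (hα : 0 < α) (ν ν' : Measure (Rm m))
    {f : Rm m → ℝ} (h1 : Integrable f (Sgamma γ ν)) (h2 : Integrable f ν') :
    ∫ x, f x ∂(discountMix γ α ν ν') =
      (1 / (1 + α)) * ∫ x, f x ∂(Sgamma γ ν) + (α / (1 + α)) * ∫ x, f x ∂ν' := by
  unfold discountMix
  rw [integral_add_measure (h1.smul_measure ENNReal.ofReal_ne_top)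
    (h2.smul_measure ENNReal.ofReal_ne_top), integral_smul_measure, integral_smul_measure,
    ENNReal.toReal_ofReal (by positivity), ENNReal.toReal_ofReal (by positivity)]
  simp [smul_eq_mul]

/-- For a preference `≽` on `𝒟₁(ℝ^m)` equivalent to a linear utility `u`,
fixed discount indifference with parameter `α` holds iff
`α·(u(δ_c) − u(δ_0)) = u(δ_{γc}) − u(δ_0)` for all `c`. -/
theorem discount_indifference_iff_positively_homogeneous
    (m : ℕ) (hm : 1 ≤ m) (γ α : ℝ)
    (hγ : γ ∈ Set.Ioc (0 : ℝ) 1) (hα : α ∈ Set.Ioc (0 : ℝ) 1)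
    (pref : Measure (Rm m) → Measure (Rm m) → Prop)
    (u : Measure (Rm m) → ℝ)
    (hequiv : ∀ ν ν' : Measure (Rm m),
      IsProbabilityMeasure ν → FiniteFirstMoment ν →
      IsProbabilityMeasure ν' → FiniteFirstMoment ν' →
      (pref ν ν' ↔ u ν' ≤ u ν))
    (humeas : Measurable (fun x : Rm m => u (Measure.dirac x)))
    (huint : ∀ ν : Measure (Rm m), IsProbabilityMeasure ν → FiniteFirstMoment ν →
      Integrable (fun x => u (Measure.dirac x)) ν)
    (hulin : ∀ ν : Measure (Rm m), IsProbabilityMeasure ν → FiniteFirstMoment ν →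
      u ν = ∫ x, u (Measure.dirac x) ∂ν) :
    ((∀ ν ν' : Measure (Rm m),
        IsProbabilityMeasure ν → FiniteFirstMoment ν →
        IsProbabilityMeasure ν' → FiniteFirstMoment ν' →
        pref (discountMix γ α ν ν') (discountMix γ α ν' ν) ∧
        pref (discountMix γ α ν' ν) (discountMix γ α ν ν'))
      ↔
      (∀ c : Rm m,
        α * (u (Measure.dirac c) - u (Measure.dirac (0 : Rm m))) =
          u (Measure.dirac (γ • c)) - u (Measure.dirac (0 : Rm m)))) := by
  obtain ⟨hγ0, hγ1⟩ := hγ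
  obtain ⟨hα0, hα1⟩ := hα
  set f : Rm m → ℝ := fun x => u (Measure.dirac x) with hf
  have h1α : (0:ℝ) < 1 + α := by linarith
  -- utility of a mixture of diracs
  have hudirac : ∀ c c' : Rm m,
      u (discountMix γ α (Measure.dirac c) (Measure.dirac c')) =
        (1 / (1 + α)) * f (γ • c) + (α / (1 + α)) * f c' := by
    intro c c'
    rw [hulin _ (mix_prob_s7 hα0 _ _ inferInstance inferInstance)
        (mix_ffm_s7 hγ0 _ _ (ffm_dirac c) (ffm_dirac c')),
      integral_mix hα0 _ _ (by rw [Sgamma_dirac]; exact integrable_dirac' humeas _)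
        (integrable_dirac' humeas _),
      Sgamma_dirac, integral_dirac' _ _ humeas.stronglyMeasurable,
      integral_dirac' _ _ humeas.stronglyMeasurable]
  constructor
  · intro h c
    obtain ⟨h1, h2⟩ := h (Measure.dirac c) (Measure.dirac 0)
      inferInstance (ffm_dirac c) inferInstance (ffm_dirac 0)
    have hp1 := mix_prob_s7 (γ := γ) hα0 (Measure.dirac c) (Measure.dirac 0)
      inferInstance inferInstance
    have hp2 := mix_prob_s7 (γ := γ) hα0 (Measure.dirac 0) (Measure.dirac c)
      inferInstance inferInstance
    have hf1 := mix_ffm_s7 (α := α) hγ0 (Measure.dirac c) (Measure.dirac 0)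
      (ffm_dirac c) (ffm_dirac 0)
    have hf2 := mix_ffm_s7 (α := α) hγ0 (Measure.dirac 0) (Measure.dirac c)
      (ffm_dirac 0) (ffm_dirac c)
    have e1 := (hequiv _ _ hp1 hf1 hp2 hf2).mp h1
    have e2 := (hequiv _ _ hp2 hf2 hp1 hf1).mp h2
    have heq : u (discountMix γ α (Measure.dirac c) (Measure.dirac 0)) =
        u (discountMix γ α (Measure.dirac 0) (Measure.dirac c)) := le_antisymm e2 e1
    rw [hudirac, hudirac, smul_zero] at heq
    have h1 : (1 / (1 + α)) * f (γ • c) + (α / (1 + α)) * f 0 =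
        (1 / (1 + α)) * f 0 + (α / (1 + α)) * f c := heq
    have : f (γ • c) + α * f 0 = f 0 + α * f c := by
      field_simp at h1
      linarith
    show α * (f c - f 0) = f (γ • c) - f 0
    linarith
  · intro h ν ν' hpν hfν hpν' hfν'
    have key : ∀ (μ μ' : Measure (Rm m)), IsProbabilityMeasure μ → FiniteFirstMoment μ →
        IsProbabilityMeasure μ' → FiniteFirstMoment μ' →
        u (discountMix γ α μ μ') =
          (1 / (1 + α)) * (α * (u μ - f 0) + f 0) + (α / (1 + α)) * u μ' := by
      intro μ μ' hpμ hfμ hpμ' hfμ'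
      have hfg : ∀ x : Rm m, f (γ • x) = α * (f x - f 0) + f 0 := by
        intro x; have := h x; linarith
      have hcomp : (fun x : Rm m => f (γ • x)) = fun x => α * (f x - f 0) + f 0 := by
        funext x; exact hfg x
      have hintS : Integrable f (Sgamma γ μ) := by
        unfold Sgamma
        rw [integrable_map_measure humeas.aestronglyMeasurable
          (measurable_scale γ).aemeasurable]
        show Integrable (fun x => f (γ • x)) μ
        rw [hcomp]
        exact (((huint μ hpμ hfμ).sub (integrable_const _)).const_mul α).add
          (integrable_const _)
      have hSval : ∫ x, f x ∂(Sgamma γ μ) = α * (u μ - f 0) + f 0 := by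
        unfold Sgamma
        rw [integral_map (measurable_scale γ).aemeasurable humeas.aestronglyMeasurable]
        show ∫ x, f (γ • x) ∂μ = _
        have hi1 : Integrable (fun x => α * (f x - f 0)) μ :=
          (((huint μ hpμ hfμ).sub (integrable_const (f 0))).const_mul α)
        rw [hcomp, integral_add hi1 (integrable_const (f 0)), integral_const_mul,
          integral_sub (huint μ hpμ hfμ) (integrable_const (f 0)), integral_const,
          probReal_univ, hulin μ hpμ hfμ]
        simp
      rw [hulin _ (mix_prob_s7 hα0 _ _ hpμ hpμ') (mix_ffm_s7 hγ0 _ _ hfμ hfμ'),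
        integral_mix hα0 _ _ hintS (huint μ' hpμ' hfμ'), hSval, hulin μ' hpμ' hfμ']
    have heq : u (discountMix γ α ν ν') = u (discountMix γ α ν' ν) := by
      rw [key ν ν' hpν hfν hpν' hfν', key ν' ν hpν' hfν' hpν hfν]
      have hq : α / (1 + α) = α * (1 / (1 + α)) := by ring
      rw [hq]; ring
    refine ⟨(hequiv _ _ (mix_prob_s7 hα0 _ _ hpν hpν') (mix_ffm_s7 hγ0 _ _ hfν hfν')
        (mix_prob_s7 hα0 _ _ hpν' hpν) (mix_ffm_s7 hγ0 _ _ hfν' hfν)).mpr heq.ge,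
      (hequiv _ _ (mix_prob_s7 hα0 _ _ hpν' hpν) (mix_ffm_s7 hγ0 _ _ hfν' hfν)
        (mix_prob_s7 hα0 _ _ hpν hpν') (mix_ffm_s7 hγ0 _ _ hfν hfν')).mpr heq.le⟩
end
end

section
/- Quantile tail identity: Let ν be a Borel probability measure on ℝ with finite first moment, let τ ∈ (0,1), and set c* := QF_ν(1 − τ). Then ∫ (g − c*)_+ dν(g) = ∫_{1−τ}^{1} QF_ν(t) dt − τ·c*, where x_+ := max{x, 0}. -/
open MeasureTheory

noncomputable section

/-- The quantile function of a Borel probability measure on ℝ: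
`QF ν t = inf { x | ν((-∞, x]) ≥ t }`. -/
def QF (ν : Measure ℝ) (t : ℝ) : ℝ :=
  sInf { x : ℝ | t ≤ (ν (Set.Iic x)).toReal }

section Aux

open ProbabilityTheory Set Filter Topology

variable {ν : Measure ℝ} [IsProbabilityMeasure ν] {t t' : ℝ}

lemma QF_eq_cdf (t : ℝ) : QF ν t = sInf { x : ℝ | t ≤ cdf ν x } := by
  simp only [QF, cdf_eq_real, measureReal_def]

lemma QF_S_nonempty (ht : t < 1) : { x : ℝ | t ≤ cdf ν x }.Nonempty := by
  obtain ⟨x, hx⟩ := ((tendsto_cdf_atTop ν).eventually (eventually_ge_nhds ht)).exists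
  exact ⟨x, hx⟩

lemma QF_S_bddBelow (ht : 0 < t) : BddBelow { x : ℝ | t ≤ cdf ν x } := by
  obtain ⟨y, hy⟩ := ((tendsto_cdf_atBot ν).eventually (eventually_lt_nhds ht)).exists
  refine ⟨y, fun x hx => ?_⟩
  by_contra h
  push_neg at h
  exact absurd (hx.trans (monotone_cdf ν h.le)) (not_le.mpr hy)

lemma QF_le_iff (ht : 0 < t) (ht1 : t < 1) (x : ℝ) : QF ν t ≤ x ↔ t ≤ cdf ν x := by
  rw [QF_eq_cdf]
  constructor
  · intro h
    have key : t ≤ cdf ν (sInf { x : ℝ | t ≤ cdf ν x }) := by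
      set a := sInf { x : ℝ | t ≤ cdf ν x } with ha
      have hrc : Tendsto (cdf ν) (𝓝[>] a) (𝓝 (cdf ν a)) :=
        ((cdf ν).right_continuous a).mono_left (nhdsWithin_mono a Set.Ioi_subset_Ici_self)
      refine ge_of_tendsto hrc ?_
      filter_upwards [self_mem_nhdsWithin] with z hz
      obtain ⟨s, hs, hsz⟩ := (csInf_lt_iff (QF_S_bddBelow ht) (QF_S_nonempty ht1)).mp hz
      exact hs.trans (monotone_cdf ν hsz.le)
    exact key.trans (monotone_cdf ν h)
  · intro h
    exact csInf_le (QF_S_bddBelow ht) h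

lemma QF_mono (ht : 0 < t) (ht' : t' < 1) (h : t ≤ t') : QF ν t ≤ QF ν t' := by
  rw [QF_eq_cdf, QF_eq_cdf]
  exact csInf_le_csInf (QF_S_bddBelow ht) (QF_S_nonempty ht') (fun x hx => h.trans hx)

lemma QF_aemeasurable : AEMeasurable (QF ν) (volume.restrict (Set.Ioo 0 1)) :=
  aemeasurable_restrict_of_monotoneOn measurableSet_Ioo fun _ ha _ hb hab =>
    QF_mono ha.1 hb.2 hab

lemma map_QF : ν = (volume.restrict (Set.Ioo (0:ℝ) 1)).map (QF ν) := by
  refine Measure.ext_of_Iic ν _ fun x => ?_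
  rw [Measure.map_apply_of_aemeasurable QF_aemeasurable measurableSet_Iic,
    Measure.restrict_apply' measurableSet_Ioo]
  have hset : QF ν ⁻¹' Set.Iic x ∩ Set.Ioo 0 1 = Set.Iic (cdf ν x) ∩ Set.Ioo 0 1 := by
    ext t
    simp only [Set.mem_inter_iff, Set.mem_preimage, Set.mem_Iic, Set.mem_Ioo,
      and_congr_left_iff]
    intro hT
    exact QF_le_iff hT.1 hT.2 x
  rw [hset]
  have h0 : 0 ≤ cdf ν x := cdf_nonneg ν x
  have h1 : cdf ν x ≤ 1 := cdf_le_one ν x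
  have hle : volume (Set.Iic (cdf ν x) ∩ Set.Ioo 0 1) ≤ ENNReal.ofReal (cdf ν x) := by
    have hsub : Set.Iic (cdf ν x) ∩ Set.Ioo 0 1 ⊆ Set.Ioc 0 (cdf ν x) :=
      fun s hs => Set.mem_Ioc.mpr ⟨hs.2.1, hs.1⟩
    calc volume (Set.Iic (cdf ν x) ∩ Set.Ioo 0 1) ≤ volume (Set.Ioc 0 (cdf ν x)) :=
          measure_mono hsub
      _ = ENNReal.ofReal (cdf ν x) := by simp [Real.volume_Ioc]
  have hge : ENNReal.ofReal (cdf ν x) ≤ volume (Set.Iic (cdf ν x) ∩ Set.Ioo 0 1) := by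
    have hsub : Set.Ioo (0:ℝ) (cdf ν x) ⊆ Set.Iic (cdf ν x) ∩ Set.Ioo 0 1 :=
      fun s hs => ⟨hs.2.le, hs.1, lt_of_lt_of_le hs.2 h1⟩
    calc ENNReal.ofReal (cdf ν x) = volume (Set.Ioo (0:ℝ) (cdf ν x)) := by simp [Real.volume_Ioo]
      _ ≤ _ := measure_mono hsub
  rw [le_antisymm hle hge, ← ofReal_cdf]

end Aux

/-- Quantile tail identity: with `c* = QF_ν(1 − τ)`,
`∫ (g − c*)₊ dν(g) = ∫_{1−τ}^1 QF_ν(t) dt − τ·c*`. -/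
theorem quantile_tail_identity (ν : Measure ℝ) (hν : IsProbabilityMeasure ν)
    (hmom : Integrable (fun x : ℝ => x) ν)
    (τ : ℝ) (hτ : τ ∈ Set.Ioo (0 : ℝ) 1) :
    ∫ g, max (g - QF ν (1 - τ)) 0 ∂ν =
      (∫ t in (1 - τ)..1, QF ν t) - τ * QF ν (1 - τ) := by
  obtain ⟨hτ0, hτ1⟩ := hτ
  have h0 : (0:ℝ) < 1 - τ := by linarith
  have h1 : 1 - τ < 1 := by linarith
  set c := QF ν (1 - τ) with hc
  -- transfer to (0,1)
  have hmap := map_QF (ν := ν)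
  have hfm : Measurable fun g : ℝ => max (g - c) 0 :=
    (measurable_id.sub_const c).max measurable_const
  have hstep : ∫ g, max (g - c) 0 ∂ν
      = ∫ t in Set.Ioo (0:ℝ) 1, max (QF ν t - c) 0 := by
    conv_lhs => rw [hmap]
    exact integral_map QF_aemeasurable hfm.aestronglyMeasurable
  -- integrability of QF on (0,1)
  have hQint : IntegrableOn (QF ν) (Set.Ioo 0 1) volume := by
    have := hmom
    rw [hmap] at this
    exact (integrable_map_measure measurable_id.aestronglyMeasurable QF_aemeasurable).mp this
  have hQint' : IntegrableOn (fun t => max (QF ν t - c) 0) (Set.Ioo 0 1) volume :=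
    (hQint.sub ((integrableOn_const_iff (C := c)).mpr (Or.inr (by simp)))).pos_part
  -- split the domain
  have hsplit : Set.Ioo (0:ℝ) 1 = Set.Ioc 0 (1 - τ) ∪ Set.Ioo (1 - τ) 1 := by
    rw [Set.Ioc_union_Ioo_eq_Ioo h0.le h1]
  have hdisj : Disjoint (Set.Ioc (0:ℝ) (1 - τ)) (Set.Ioo (1 - τ) 1) :=
    by rw [Set.disjoint_left]; rintro s hs ht; exact absurd hs.2 (not_le.mpr ht.1)
  have hsub1 : Set.Ioc (0:ℝ) (1 - τ) ⊆ Set.Ioo 0 1 := fun s hs => ⟨hs.1, lt_of_le_of_lt hs.2 h1⟩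
  have hsub2 : Set.Ioo ((1:ℝ) - τ) 1 ⊆ Set.Ioo 0 1 := fun s hs => ⟨h0.trans hs.1, hs.2⟩
  have hI1 : ∫ t in Set.Ioc (0:ℝ) (1 - τ), max (QF ν t - c) 0 = 0 := by
    refine setIntegral_eq_zero_of_forall_eq_zero fun t ht => ?_
    have : QF ν t ≤ c := QF_mono ht.1 h1 ht.2
    simp [max_eq_right, sub_nonpos.mpr this]
  have hI2 : ∫ t in Set.Ioo ((1:ℝ) - τ) 1, max (QF ν t - c) 0
      = (∫ t in Set.Ioo ((1:ℝ) - τ) 1, QF ν t) - τ * c := by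
    have heq : ∀ t ∈ Set.Ioo ((1:ℝ) - τ) 1, max (QF ν t - c) 0 = QF ν t - c := by
      intro t ht
      have : c ≤ QF ν t := QF_mono h0 ht.2 ht.1.le
      simp [max_eq_left, sub_nonneg.mpr this]
    rw [setIntegral_congr_fun measurableSet_Ioo heq,
      integral_sub (hQint.mono_set hsub2) ((integrableOn_const_iff (C := c)).mpr (Or.inr (by simp))),
      setIntegral_const]
    have : (volume (Set.Ioo ((1:ℝ) - τ) 1)).toReal = τ := by
      rw [Real.volume_Ioo, ENNReal.toReal_ofReal (by linarith)]
      ring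
    rw [measureReal_def, this, smul_eq_mul]
  rw [hstep, hsplit,
    setIntegral_union hdisj measurableSet_Ioo
      (hQint'.mono_set (hsplit ▸ hsub1)) (hQint'.mono_set (hsplit ▸ hsub2)),
    hI1, hI2, zero_add,
    intervalIntegral.integral_of_le h1.le, ← integral_Ioc_eq_integral_Ioo]
end
end
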